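/- For fractal percolation with parameters d ≥ 1, M ≥ 2 and p > M^{-d}, and any N ≥ 1, the conditional probability that every cube of Q_N is surviving, given non-extinction, equals ((1−q) p^{M^d/(M^d−1)})^{M^{dN}−1}; that is, P(Z_N = M^{dN} | E ≠ ∅) = ((1−q) p^{M^d/(M^d−1)})^{M^{dN}−1}, where q = P(E = ∅) is the extinction probability. -/

import Mathlib

open MeasureTheory ProbabilityTheory Filter Metric Set
open scoped ENNReal ProbabilityTheory RealInnerProductSpace

noncomputable section

/-- The closed `M`-adic cube of level `n` in `[0,1]^d` indexed by `k : Fin d → ℕ`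
(with `k i < M ^ n`). -/
def mCube (d M n : ℕ) (k : Fin d → ℕ) : Set (EuclideanSpace ℝ (Fin d)) :=
  {x | ∀ i, (k i : ℝ) / (M : ℝ) ^ n ≤ x i ∧ x i ≤ ((k i : ℝ) + 1) / (M : ℝ) ^ n}

/-- Given retention decisions for all `M`-adic cubes of all levels `≥ 1`, the predicate saying
that the level-`n` cube indexed by `k` is retained at every step of the construction, i.e. that
it is one of the cubes constituting `E_n`. -/
def kept (M d : ℕ) (retain : ℕ × (Fin d → ℕ) → Bool) : ℕ → (Fin d → ℕ) → Prop
  | 0, _ => True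
  | n + 1, k => kept M d retain n (fun i => k i / M) ∧ retain (n + 1, k) = true

/-- The union `E_n` of the retained cubes of level `n`, for a given retention configuration. -/
def percLevel (d M n : ℕ) (retain : ℕ × (Fin d → ℕ) → Bool) :
    Set (EuclideanSpace ℝ (Fin d)) :=
  ⋃ (k : Fin d → ℕ) (_ : (∀ i, k i < M ^ n) ∧ kept M d retain n k), mCube d M n k

/-- The fractal percolation limit set `E = ⋂ n, E_n`, for a given retention configuration. -/
def percLimit (d M : ℕ) (retain : ℕ × (Fin d → ℕ) → Bool) :
    Set (EuclideanSpace ℝ (Fin d)) :=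
  ⋂ n, percLevel d M n retain

/-- The almost sure Hausdorff dimension `s = d + log p / log M` of the fractal percolation
limit set conditioned on non-extinction. -/
def percDim (d M : ℕ) (p : ℝ) : ℝ := d + Real.log p / Real.log M

/-- A level-`n` cube is *surviving* if for every `m ≥ 1` it contains a retained cube of level
`n + m`. -/
def survivingPerc (M d : ℕ) (retain : ℕ × (Fin d → ℕ) → Bool) (n : ℕ) (k : Fin d → ℕ) :
    Prop :=
  ∀ m : ℕ, ∃ k' : Fin d → ℕ, (∀ i, k' i < M ^ (n + m)) ∧ (∀ i, k' i / M ^ m = k i) ∧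
    kept M d retain (n + m) k'

/-- `Z_n` : the number of surviving cubes of level `n`. -/
def Zperc (M d : ℕ) (retain : ℕ × (Fin d → ℕ) → Bool) (n : ℕ) : ℕ :=
  Set.ncard {k : Fin d → ℕ | (∀ i, k i < M ^ n) ∧ survivingPerc M d retain n k}

namespace S12

abbrev Idx (d : ℕ) := ℕ × (Fin d → ℕ)

variable (M d : ℕ)

/-- valid coordinates -/
def valid (q : Idx d) : Prop := 1 ≤ q.1 ∧ ∀ i, q.2 i < M ^ q.1

abbrev Tv := {q : Idx d // valid M d q}

def alive (r : Idx d → Bool) : Prop :=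
  ∀ n, ∃ k : Fin d → ℕ, (∀ i, k i < M ^ n) ∧ kept M d r n k

variable {M d}

def child (M : ℕ) {d : ℕ} (k : Fin d → ℕ) (m : ℕ) (j : Fin d → ℕ) : Fin d → ℕ :=
  fun i => k i * M ^ m + j i

def shiftCfg (M : ℕ) {d : ℕ} (r : Idx d → Bool) (N : ℕ) (k : Fin d → ℕ) : Idx d → Bool :=
  fun q => r (N + q.1, child M k q.1 q.2)

theorem kept_congr (hM : 1 ≤ M) {r r' : Idx d → Bool} :
    ∀ {m : ℕ}, (∀ t jj, 1 ≤ t → t ≤ m → (∀ i, jj i < M ^ t) → r (t, jj) = r' (t, jj)) →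
    ∀ {j : Fin d → ℕ}, (∀ i, j i < M ^ m) → (kept M d r m j ↔ kept M d r' m j) := by
  intro m
  induction m with
  | zero => intro _ _ _; simp [kept]
  | succ m ih =>
    intro h j hj
    have hdiv : ∀ i, j i / M < M ^ m := fun i => by
      rw [Nat.div_lt_iff_lt_mul (by omega)]
      calc j i < M ^ (m+1) := hj i
        _ = M ^ m * M := pow_succ M m
    have h' : ∀ t jj, 1 ≤ t → t ≤ m → (∀ i, jj i < M ^ t) → r (t, jj) = r' (t, jj) :=
      fun t jj h1 h2 h3 => h t jj h1 (h2.trans (Nat.le_succ m)) h3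
    simp only [kept]
    rw [ih h' hdiv, h (m+1) j (by omega) le_rfl hj]

theorem kept_child (hM : 1 ≤ M) {r : Idx d → Bool} {N : ℕ} {k : Fin d → ℕ}
    (hk : ∀ i, k i < M ^ N) :
    ∀ {m : ℕ} {j : Fin d → ℕ}, (∀ i, j i < M ^ m) →
      (kept M d r (N + m) (child M k m j) ↔
        kept M d r N k ∧ kept M d (shiftCfg M r N k) m j) := by
  intro m
  induction m with
  | zero =>
    intro j hj
    have : child M k 0 j = k := by
      funext i
      have : j i = 0 := by have := hj i; simpa using this
      simp [child, this]
    simp [this, kept]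
  | succ m ih =>
    intro j hj
    have hdiv : ∀ i, j i / M < M ^ m := fun i => by
      rw [Nat.div_lt_iff_lt_mul (by omega)]
      calc j i < M ^ (m+1) := hj i
        _ = M ^ m * M := pow_succ M m
    have hch : (fun i => child M k (m+1) j i / M) = child M k m (fun i => j i / M) := by
      funext i
      show (k i * M ^ (m+1) + j i) / M = k i * M ^ m + j i / M
      rw [pow_succ, ← mul_assoc, mul_comm (k i * M ^ m) M,
        Nat.mul_add_div (by omega : 0 < M)]
    have hNm : N + (m + 1) = (N + m) + 1 := by omega
    show kept M d r ((N+m)+1) (child M k (m+1) j) ↔ _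
    simp only [kept]
    rw [show (fun i => child M k (m+1) j i / M) = child M k m (fun i => j i / M) from hch,
      ih hdiv]
    show _ ↔ kept M d r N k ∧ (kept M d (shiftCfg M r N k) m (fun i => j i / M) ∧
      shiftCfg M r N k (m+1, j) = true)
    show _ ↔ kept M d r N k ∧ (kept M d (shiftCfg M r N k) m (fun i => j i / M) ∧
      r ((N+m)+1, child M k (m+1) j) = true)
    tauto

theorem surviving_iff (hM : 1 ≤ M) {r : Idx d → Bool} {N : ℕ} {k : Fin d → ℕ}
    (hk : ∀ i, k i < M ^ N) :
    survivingPerc M d r N k ↔ kept M d r N k ∧ alive M d (shiftCfg M r N k) := by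
  have hMpos : 0 < M := by omega
  constructor
  · intro hs
    constructor
    · obtain ⟨k', hb, hq, hk'⟩ := hs 0
      have : k' = k := by funext i; have := hq i; simpa using this
      subst this
      simpa using hk'
    · intro m
      obtain ⟨k', hb, hq, hk'⟩ := hs m
      have hpm : 0 < M ^ m := pow_pos hMpos m
      refine ⟨fun i => k' i % M ^ m, fun i => Nat.mod_lt _ hpm, ?_⟩
      have hck : child M k m (fun i => k' i % M ^ m) = k' := by
        funext i
        show k i * M ^ m + k' i % M ^ m = k' i
        conv_rhs => rw [← Nat.div_add_mod (k' i) (M ^ m)]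
        rw [hq i]
        ring
      have := (kept_child hM hk (m := m) (j := fun i => k' i % M ^ m)
        (fun i => Nat.mod_lt _ hpm)).mp (by rw [hck]; exact hk')
      exact this.2
  · rintro ⟨hkept, halive⟩ m
    obtain ⟨j, hj, hkj⟩ := halive m
    refine ⟨child M k m j, ?_, ?_, ?_⟩
    · intro i
      show k i * M ^ m + j i < M ^ (N + m)
      have h1 : k i * M ^ m + j i < (k i + 1) * M ^ m := by
        have := hj i; nlinarith [hj i]
      have h2 : (k i + 1) * M ^ m ≤ M ^ N * M ^ m :=
        Nat.mul_le_mul_right _ (hk i)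
      rw [pow_add]; omega
    · intro i
      show (k i * M ^ m + j i) / M ^ m = k i
      have hpm : 0 < M ^ m := pow_pos hMpos m
      rw [mul_comm, Nat.mul_add_div hpm, Nat.div_eq_of_lt (hj i), add_zero]
    · exact (kept_child hM hk hj).mpr ⟨hkept, hkj⟩

theorem setOf_lt_eq (b : ℕ) :
    {k : Fin d → ℕ | ∀ i, k i < b} =
      ↑(Fintype.piFinset fun _ : Fin d => Finset.range b) := by
  ext k
  simp [Fintype.mem_piFinset]

theorem finite_setOf_lt (b : ℕ) : {k : Fin d → ℕ | ∀ i, k i < b}.Finite := by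
  rw [setOf_lt_eq]
  exact (Fintype.piFinset fun _ : Fin d => Finset.range b).finite_toSet

theorem mCube_eq (n : ℕ) (k : Fin d → ℕ) :
    mCube d M n k = (⇑(EuclideanSpace.equiv (Fin d) ℝ)) ⁻¹'
      (Set.pi Set.univ fun i => Set.Icc ((k i : ℝ) / (M : ℝ) ^ n)
        (((k i : ℝ) + 1) / (M : ℝ) ^ n)) := by
  ext x
  constructor
  · intro h i _
    exact ⟨(h i).1, (h i).2⟩
  · intro h i
    exact h i (Set.mem_univ i)

theorem isClosed_mCube (n : ℕ) (k : Fin d → ℕ) : IsClosed (mCube d M n k) := by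
  rw [mCube_eq]
  exact (isClosed_set_pi fun i _ => isClosed_Icc).preimage
    (EuclideanSpace.equiv (Fin d) ℝ).continuous

theorem isCompact_mCube (n : ℕ) (k : Fin d → ℕ) : IsCompact (mCube d M n k) := by
  rw [mCube_eq]
  rw [show (⇑(EuclideanSpace.equiv (Fin d) ℝ)) ⁻¹'
      (Set.pi Set.univ fun i => Set.Icc ((k i : ℝ) / (M : ℝ) ^ n)
        (((k i : ℝ) + 1) / (M : ℝ) ^ n)) =
      ⇑(EuclideanSpace.equiv (Fin d) ℝ).symm ''
      (Set.pi Set.univ fun i => Set.Icc ((k i : ℝ) / (M : ℝ) ^ n)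
        (((k i : ℝ) + 1) / (M : ℝ) ^ n)) from
    ((EuclideanSpace.equiv (Fin d) ℝ).toEquiv.image_symm_eq_preimage _).symm]
  exact (isCompact_univ_pi fun i => isCompact_Icc).image
    (EuclideanSpace.equiv (Fin d) ℝ).symm.continuous

theorem percLevel_eq_biUnion (n : ℕ) (r : Idx d → Bool) :
    percLevel d M n r =
      ⋃ k ∈ {k : Fin d → ℕ | (∀ i, k i < M ^ n) ∧ kept M d r n k}, mCube d M n k := rfl

theorem isClosed_percLevel (n : ℕ) (r : Idx d → Bool) : IsClosed (percLevel d M n r) := by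
  rw [percLevel_eq_biUnion]
  exact Set.Finite.isClosed_biUnion
    (((finite_setOf_lt (M ^ n))).subset fun k hk => hk.1)
    (fun k _ => isClosed_mCube n k)

theorem isCompact_percLevel (n : ℕ) (r : Idx d → Bool) : IsCompact (percLevel d M n r) := by
  rw [percLevel_eq_biUnion]
  exact Set.Finite.isCompact_biUnion
    (((finite_setOf_lt (M ^ n))).subset fun k hk => hk.1)
    (fun k _ => isCompact_mCube n k)

theorem percLevel_antitone (hM : 2 ≤ M) (n : ℕ) (r : Idx d → Bool) :
    percLevel d M (n + 1) r ⊆ percLevel d M n r := by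
  have hMpos : (0:ℝ) < (M:ℝ) := by positivity
  have hMn : (0:ℝ) < (M:ℝ) ^ n := by positivity
  have hMn1 : (0:ℝ) < (M:ℝ) ^ (n+1) := by positivity
  intro x hx
  rw [percLevel_eq_biUnion] at hx ⊢
  obtain ⟨k, hk, hxk⟩ := Set.mem_iUnion₂.mp hx
  refine Set.mem_biUnion (x := fun i => k i / M) ?_ ?_
  · refine ⟨fun i => ?_, hk.2.1⟩
    rw [Nat.div_lt_iff_lt_mul (by omega)]
    calc k i < M ^ (n+1) := hk.1 i
      _ = M ^ n * M := pow_succ M n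
  · intro i
    obtain ⟨h1, h2⟩ := hxk i
    constructor
    · have step : ((k i / M : ℕ) : ℝ) / (M:ℝ) ^ n ≤ (k i : ℝ) / (M:ℝ) ^ (n+1) := by
        rw [div_le_div_iff₀ hMn hMn1, pow_succ]
        have : ((k i / M : ℕ) : ℝ) * M ≤ (k i : ℝ) := by
          have := Nat.div_mul_le_self (k i) M
          exact_mod_cast this
        nlinarith
      linarith
    · have step : ((k i : ℝ) + 1) / (M:ℝ) ^ (n+1) ≤ (((k i / M : ℕ) : ℝ) + 1) / (M:ℝ) ^ n := by
        rw [div_le_div_iff₀ hMn1 hMn, pow_succ]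
        have h4 : (k i : ℝ) + 1 ≤ (((k i / M : ℕ) : ℝ) + 1) * M := by
          have h3 : k i + 1 ≤ M * (k i / M) + M := by
            conv_lhs => rw [← Nat.div_add_mod (k i) M]
            have := Nat.mod_lt (k i) (show 0 < M by omega)
            omega
          have : (k i : ℝ) + 1 ≤ (M:ℝ) * ((k i / M : ℕ) : ℝ) + M := by exact_mod_cast h3
          nlinarith
        nlinarith
      linarith

theorem percLevel_nonempty (hM : 2 ≤ M) {n : ℕ} {r : Idx d → Bool}
    (h : ∃ k : Fin d → ℕ, (∀ i, k i < M ^ n) ∧ kept M d r n k) :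
    (percLevel d M n r).Nonempty := by
  obtain ⟨k, hk⟩ := h
  have hMn : (0:ℝ) < (M:ℝ) ^ n := by positivity
  refine ⟨(show EuclideanSpace ℝ (Fin d) from WithLp.toLp 2 fun i => (k i : ℝ) / (M:ℝ) ^ n), ?_⟩
  rw [percLevel_eq_biUnion]
  refine Set.mem_biUnion hk ?_
  intro i
  refine ⟨le_rfl, ?_⟩
  rw [div_le_div_iff₀ hMn hMn]
  nlinarith

theorem percLimit_ne_empty_iff (hM : 2 ≤ M) (r : Idx d → Bool) :
    percLimit d M r ≠ ∅ ↔ alive M d r := by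
  constructor
  · intro h n
    obtain ⟨x, hx⟩ := Set.nonempty_iff_ne_empty.mpr h
    have := Set.mem_iInter.mp hx n
    rw [percLevel_eq_biUnion] at this
    obtain ⟨k, hk, -⟩ := Set.mem_iUnion₂.mp this
    exact ⟨k, hk⟩
  · intro ha
    rw [← Set.nonempty_iff_ne_empty]
    exact IsCompact.nonempty_iInter_of_sequence_nonempty_isCompact_isClosed
      (fun n => percLevel d M n r)
      (fun n => percLevel_antitone hM n r)
      (fun n => percLevel_nonempty hM (ha n))
      (isCompact_percLevel 0 r)
      (fun n => isClosed_percLevel n r)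

theorem zfull_iff (hM : 2 ≤ M) (r : Idx d → Bool) (N : ℕ) :
    Zperc M d r N = M ^ (d * N) ↔
      ∀ k : Fin d → ℕ, (∀ i, k i < M ^ N) → survivingPerc M d r N k := by
  have hsub : {k : Fin d → ℕ | (∀ i, k i < M ^ N) ∧ survivingPerc M d r N k} ⊆
      {k : Fin d → ℕ | ∀ i, k i < M ^ N} := fun k hk => hk.1
  have hfin : {k : Fin d → ℕ | ∀ i, k i < M ^ N}.Finite := finite_setOf_lt _
  have hcard : {k : Fin d → ℕ | ∀ i, k i < M ^ N}.ncard = M ^ (d * N) := by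
    rw [setOf_lt_eq, Set.ncard_coe_finset, Fintype.card_piFinset]
    simp only [Finset.card_range, Finset.prod_const, Finset.card_univ, Fintype.card_fin]
    rw [← pow_mul, Nat.mul_comm]
  constructor
  · intro hz k hk
    have heq : {k : Fin d → ℕ | (∀ i, k i < M ^ N) ∧ survivingPerc M d r N k} =
        {k : Fin d → ℕ | ∀ i, k i < M ^ N} := by
      apply Set.eq_of_subset_of_ncard_le hsub _ hfin
      rw [hcard]
      exact le_of_eq hz.symm
    have : k ∈ {k : Fin d → ℕ | (∀ i, k i < M ^ N) ∧ survivingPerc M d r N k} := by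
      rw [heq]; exact hk
    exact this.2
  · intro h
    have heq : {k : Fin d → ℕ | (∀ i, k i < M ^ N) ∧ survivingPerc M d r N k} =
        {k : Fin d → ℕ | ∀ i, k i < M ^ N} := by
      apply Set.Subset.antisymm hsub
      intro k hk
      exact ⟨hk, h k hk⟩
    rw [Zperc, heq, hcard]

theorem allkept_iff (hM : 1 ≤ M) (r : Idx d → Bool) (N : ℕ) :
    (∀ k : Fin d → ℕ, (∀ i, k i < M ^ N) → kept M d r N k) ↔
      ∀ t jj, 1 ≤ t → t ≤ N → (∀ i, jj i < M ^ t) → r (t, jj) = true := by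
  have hMpos : 0 < M := hM
  constructor
  · intro h t jj h1 htN hjj
    obtain ⟨u, rfl⟩ : ∃ u, N = t + u := ⟨N - t, by omega⟩
    have hb : ∀ i, child M jj u 0 i < M ^ (t + u) := by
      intro i
      show jj i * M ^ u + 0 < M ^ (t + u)
      have h2 : (jj i + 1) * M ^ u ≤ M ^ t * M ^ u :=
        Nat.mul_le_mul_right _ (hjj i)
      rw [pow_add]
      nlinarith [pow_pos hMpos u]
    have hk := h _ hb
    have := (kept_child hM (N := t) hjj (m := u) (j := 0)
      (fun i => pow_pos hMpos _)).mp hk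
    obtain ⟨hkt, -⟩ := this
    obtain ⟨t', rfl⟩ : ∃ t', t = t' + 1 := ⟨t - 1, by omega⟩
    exact hkt.2
  · induction N with
    | zero => intro _ k _; simp [kept]
    | succ n ih =>
      intro h k hk
      refine ⟨ih (fun t jj h1 h2 h3 => h t jj h1 (by omega) h3) _ (fun i => ?_),
        h (n+1) k (by omega) le_rfl hk⟩
      rw [Nat.div_lt_iff_lt_mul hMpos]
      calc k i < M ^ (n+1) := hk i
        _ = M ^ n * M := pow_succ M n

section Prob

variable {Ω : Type} [MeasurableSpace Ω] {P : Measure Ω} [IsProbabilityMeasure P]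

/-- Reindexing an independent family along an injective map. -/
theorem iIndepFun_comp_inj {ι' κ : Type*} {X : ι' → Ω → Bool}
    (hi : iIndepFun X P) (g : κ → ι') (hg : Function.Injective g) :
    iIndepFun (fun j => X (g j)) P := by
  classical
  rw [iIndepFun_iff_measure_inter_preimage_eq_mul] at hi ⊢
  intro S sets _
  have key : ∀ j ∈ S, (⋂ j' ∈ S, ⋂ (_ : g j' = g j), sets j') = sets j := by
    intro j hj
    apply Set.Subset.antisymm
    · intro x hx
      simp only [Set.mem_iInter] at hx
      exact hx j hj rfl
    · intro x hx
      simp only [Set.mem_iInter]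
      intro j' hj' he
      rwa [hg he]
  have hset : (⋂ j ∈ S, X (g j) ⁻¹' sets j) =
      ⋂ i ∈ S.image g, X i ⁻¹' (⋂ j ∈ S, ⋂ (_ : g j = i), sets j) := by
    ext ω
    simp only [Set.mem_iInter, Set.mem_preimage, Finset.mem_image]
    constructor
    · rintro h i ⟨j, hj, rfl⟩ j' hj' he
      rw [← he]
      exact h j' hj'
    · intro h j hj
      exact h (g j) ⟨j, hj, rfl⟩ j hj rfl
  rw [hset, hi (S.image g) (fun i _ => trivial),
    Finset.prod_image (fun a ha b hb he => hg he)]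
  apply Finset.prod_congr rfl
  intro j hj
  rw [key j hj]

theorem tuple_prob {ι' : Type*} {X : ι' → Ω → Bool}
    (hm : ∀ q, Measurable (X q)) (hi : iIndepFun X P)
    (F : Finset ι') (t : Set ((q : F) → Bool)) :
    P ((fun ω (q : F) => X q.1 ω) ⁻¹' t) =
      ∑ b ∈ (Set.toFinite t).toFinset, ∏ q ∈ F.attach, P (X q.1 ⁻¹' {b q}) := by
  classical
  have hatom : ∀ b : (q : F) → Bool,
      {ω | (fun q : F => X q.1 ω) = b} = ⋂ q ∈ F.attach, X q.1 ⁻¹' {b q} := by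
    intro b
    ext ω
    simp only [Set.mem_setOf_eq, funext_iff, Set.mem_iInter, Set.mem_preimage,
      Set.mem_singleton_iff, Finset.mem_attach, forall_true_left]
  have hsplit : ((fun ω (q : F) => X q.1 ω) ⁻¹' t) =
      ⋃ b ∈ (Set.toFinite t).toFinset, {ω | (fun q : F => X q.1 ω) = b} := by
    ext ω
    simp only [Set.mem_preimage, Set.mem_iUnion, Set.mem_setOf_eq,
      Set.Finite.mem_toFinset, exists_prop]
    exact ⟨fun h => ⟨_, h, rfl⟩, by rintro ⟨b, hb, he⟩; rw [he]; exact hb⟩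
  rw [hsplit, measure_biUnion_finset ?hd ?hmeas]
  · apply Finset.sum_congr rfl
    intro b _
    rw [hatom b]
    exact (iIndepFun_comp_inj hi (fun q : F => q.1) Subtype.val_injective).measure_inter_preimage_eq_mul
      F.attach (fun _ _ => trivial)
  case hd =>
    intro b hb b' hb' hne
    simp only [Function.onFun]
    rw [Set.disjoint_left]
    intro ω h1 h2
    exact hne (h1.symm.trans h2)
  case hmeas =>
    intro b _
    rw [hatom b]
    exact Set.Finite.measurableSet_biInter (Finset.finite_toSet _)
      (fun q _ => ((hm q.1) trivial))

theorem law_eq {ι' : Type} [Countable ι'] {Z W : ι' → Ω → Bool}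
    (hmZ : ∀ q, Measurable (Z q)) (hmW : ∀ q, Measurable (W q))
    (hiZ : iIndepFun Z P)
    (hiW : iIndepFun W P)
    {pr : ℝ≥0∞} (hbZ : ∀ q, P (Z q ⁻¹' {true}) = pr)
    (hbW : ∀ q, P (W q ⁻¹' {true}) = pr)
    {G : Set (ι' → Bool)} (hG : MeasurableSet G) :
    P ((fun ω q => Z q ω) ⁻¹' G) = P ((fun ω q => W q ω) ⁻¹' G) := by
  classical
  have hmapZ : Measurable fun ω (q : ι') => Z q ω := measurable_pi_lambda _ hmZ
  have hmapW : Measurable fun ω (q : ι') => W q ω := measurable_pi_lambda _ hmW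
  have hmarg : ∀ (V : ι' → Ω → Bool), (∀ q, Measurable (V q)) →
      (∀ q, P (V q ⁻¹' {true}) = pr) → ∀ q (bb : Bool),
      P (V q ⁻¹' {bb}) = if bb then pr else 1 - pr := by
    intro V hmV hbV q bb
    cases bb with
    | true => simpa using hbV q
    | false =>
      have hc : V q ⁻¹' {false} = (V q ⁻¹' {true})ᶜ := by
        ext ω; simp
      rw [hc, prob_compl_eq_one_sub ((hmV q) trivial), hbV q]
      simp
  have hmap : P.map (fun ω (q : ι') => Z q ω) = P.map (fun ω (q : ι') => W q ω) := by
    refine ext_of_generate_finite (measurableCylinders fun _ : ι' => Bool)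
      generateFrom_measurableCylinders.symm isPiSystem_measurableCylinders ?_ ?_
    · intro S hS
      obtain ⟨I, t, ht, rfl⟩ := (mem_measurableCylinders S).mp hS
      rw [Measure.map_apply hmapZ (ht.cylinder), Measure.map_apply hmapW (ht.cylinder)]
      have hZ : (fun ω (q : ι') => Z q ω) ⁻¹' cylinder I t =
          (fun ω (q : I) => Z q.1 ω) ⁻¹' t := rfl
      have hW : (fun ω (q : ι') => W q ω) ⁻¹' cylinder I t =
          (fun ω (q : I) => W q.1 ω) ⁻¹' t := rfl
      rw [hZ, hW, tuple_prob hmZ hiZ I t, tuple_prob hmW hiW I t]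
      apply Finset.sum_congr rfl
      intro b _
      apply Finset.prod_congr rfl
      intro q _
      rw [hmarg Z hmZ hbZ q.1 (b q), hmarg W hmW hbW q.1 (b q)]
    · have h1 : IsProbabilityMeasure (P.map (fun ω (q : ι') => Z q ω)) :=
        Measure.isProbabilityMeasure_map hmapZ.aemeasurable
      have h2 : IsProbabilityMeasure (P.map (fun ω (q : ι') => W q ω)) :=
        Measure.isProbabilityMeasure_map hmapW.aemeasurable
      rw [h1.measure_univ, h2.measure_univ]
  rw [← Measure.map_apply hmapZ hG, ← Measure.map_apply hmapW hG, hmap]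

theorem blocks_indep {ι' : Type*} {X : ι' → Ω → Bool}
    (hm : ∀ q, Measurable (X q)) (hi : iIndepFun X P)
    {κ : Type*} (s : Finset κ) (F : κ → Finset ι')
    (hdisj : ∀ a ∈ s, ∀ b ∈ s, a ≠ b → Disjoint (F a) (F b))
    (G : (a : κ) → Set ((q : F a) → Bool)) :
    P (⋂ a ∈ s, (fun ω (q : F a) => X q.1 ω) ⁻¹' G a) =
      ∏ a ∈ s, P ((fun ω (q : F a) => X q.1 ω) ⁻¹' G a) := by
  classical
  revert hdisj
  induction s using Finset.induction_on with
  | empty => intro _; simp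
  | @insert a s ha ih =>
    intro hdisj
    rw [Finset.set_biInter_insert, Finset.prod_insert ha]
    have hU : Disjoint (F a) (s.biUnion F) := by
      rw [Finset.disjoint_biUnion_right]
      intro b hb
      exact hdisj a (Finset.mem_insert_self a s) b (Finset.mem_insert_of_mem hb)
        (by rintro rfl; exact ha hb)
    let G' : Set ((q : s.biUnion F) → Bool) := {g | ∀ b (hb : b ∈ s),
      (fun q : F b => g ⟨q.1, Finset.mem_biUnion.mpr ⟨b, hb, q.2⟩⟩) ∈ G b}
    have hrest : (⋂ b ∈ s, (fun ω (q : F b) => X q.1 ω) ⁻¹' G b) =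
        (fun ω (q : s.biUnion F) => X q.1 ω) ⁻¹' G' := by
      ext ω
      simp only [Set.mem_iInter, Set.mem_preimage, G', Set.mem_setOf_eq]
    have hIF := (hi.indepFun_finset (F a) (s.biUnion F) hU hm).measure_inter_preimage_eq_mul
      (G a) G' (Set.toFinite (G a)).measurableSet (Set.toFinite G').measurableSet
    rw [hrest, hIF, ← hrest,
      ih (fun x hx y hy hxy => hdisj x (Finset.mem_insert_of_mem hx) y
        (Finset.mem_insert_of_mem hy) hxy)]

end Prob

instance valid_decidable {M d : ℕ} (q : Idx d) : Decidable (valid M d q) := by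
  unfold valid; infer_instance

variable (M d) in
/-- Extend a configuration on valid coordinates by `false`. -/
def extCfg (g : Tv M d → Bool) : Idx d → Bool :=
  fun q => if h : valid M d q then g ⟨q, h⟩ else false

/-- The reindexing map sending the abstract tree into the subtree below cube `k` of level `N`. -/
def sigma' (M : ℕ) {d : ℕ} (N : ℕ) (k : Fin d → ℕ) (q : Idx d) : Idx d :=
  (N + q.1, child M k q.1 q.2)

theorem sigma'_injective (M : ℕ) {d : ℕ} (N : ℕ) (k : Fin d → ℕ) :
    Function.Injective (sigma' M N k) := by
  rintro ⟨t, j⟩ ⟨t', j'⟩ h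
  simp only [sigma', Prod.mk.injEq] at h
  obtain ⟨h1, h2⟩ := h
  have ht : t = t' := by omega
  subst ht
  refine Prod.ext rfl ?_
  funext i
  have := congrFun h2 i
  simp only [child] at this
  change j i = j' i
  omega

theorem shiftCfg_sigma' (M : ℕ) {d : ℕ} (r : Idx d → Bool) (N : ℕ) (k : Fin d → ℕ)
    (q : Idx d) : shiftCfg M r N k q = r (sigma' M N k q) := rfl

variable (M d) in
/-- The finset of valid coordinates of level between `1` and `m`. -/
def TF (m : ℕ) : Finset (Idx d) :=
  (Finset.range m).biUnion fun t =>
    (Fintype.piFinset fun _ : Fin d => Finset.range (M ^ (t+1))).image fun k => (t+1, k)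

theorem mem_TF {q : Idx d} {m : ℕ} :
    q ∈ TF M d m ↔ 1 ≤ q.1 ∧ q.1 ≤ m ∧ ∀ i, q.2 i < M ^ q.1 := by
  obtain ⟨t, j⟩ := q
  simp only [TF, Finset.mem_biUnion, Finset.mem_range, Finset.mem_image,
    Fintype.mem_piFinset, Prod.mk.injEq]
  constructor
  · rintro ⟨t', ht', k, hk, rfl, rfl⟩
    exact ⟨by omega, by omega, hk⟩
  · rintro ⟨h1, h2, h3⟩
    exact ⟨t - 1, by omega, j, by
      obtain ⟨t', rfl⟩ : ∃ t', t = t' + 1 := ⟨t - 1, by omega⟩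
      simpa using h3, by omega, rfl⟩

theorem card_TF (m : ℕ) : (TF M d m).card = ∑ t ∈ Finset.range m, M ^ (d * (t+1)) := by
  rw [TF, Finset.card_biUnion]
  · apply Finset.sum_congr rfl
    intro t _
    rw [Finset.card_image_of_injective _ (fun a b h => (Prod.mk.injEq _ _ _ _ ▸ h).2),
      Fintype.card_piFinset]
    simp only [Finset.card_range, Finset.prod_const, Finset.card_univ, Fintype.card_fin]
    rw [← pow_mul, Nat.mul_comm]
  · intro t _ t' _ hne
    rw [Function.onFun, Finset.disjoint_left]
    rintro ⟨a, b⟩ h1 h2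
    simp only [Finset.mem_image, Fintype.mem_piFinset, Prod.mk.injEq] at h1 h2
    obtain ⟨k, -, hk, -⟩ := h1
    obtain ⟨k', -, hk', -⟩ := h2
    omega

theorem valid_of_mem_TF {q : Idx d} {m : ℕ} (h : q ∈ TF M d m) : valid M d q :=
  ⟨(mem_TF.mp h).1, (mem_TF.mp h).2.2⟩

theorem exists_kept_mono (hM : 1 ≤ M) {r : Idx d → Bool} {m : ℕ}
    (h : ∃ j : Fin d → ℕ, (∀ i, j i < M ^ (m+1)) ∧ kept M d r (m+1) j) :
    ∃ j : Fin d → ℕ, (∀ i, j i < M ^ m) ∧ kept M d r m j := by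
  obtain ⟨j, hj, hk⟩ := h
  refine ⟨fun i => j i / M, fun i => ?_, hk.1⟩
  rw [Nat.div_lt_iff_lt_mul (by omega)]
  calc j i < M ^ (m+1) := hj i
    _ = M ^ m * M := pow_succ M m

theorem child_lt (hM : 1 ≤ M) {N t : ℕ} {k j : Fin d → ℕ} (hk : ∀ i, k i < M ^ N)
    (hj : ∀ i, j i < M ^ t) : ∀ i, child M k t j i < M ^ (N + t) := by
  intro i
  show k i * M ^ t + j i < M ^ (N + t)
  have h2 : (k i + 1) * M ^ t ≤ M ^ N * M ^ t := Nat.mul_le_mul_right _ (hk i)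
  rw [pow_add]
  nlinarith [hj i]

theorem child_div {M : ℕ} (hM : 1 ≤ M) {t a j : ℕ} (hj : j < M ^ t) :
    (a * M ^ t + j) / M ^ t = a := by
  have hpm : 0 < M ^ t := pow_pos (by omega) t
  rw [mul_comm, Nat.mul_add_div hpm, Nat.div_eq_of_lt hj, add_zero]

section Events

variable {Ω : Type} [MeasurableSpace Ω] {P : Measure Ω} [IsProbabilityMeasure P]
variable {X : Idx d → Ω → Bool}

theorem meas_kept (hm : ∀ q, Measurable (X q)) (n : ℕ) (k : Fin d → ℕ) :
    MeasurableSet {ω | kept M d (fun q => X q ω) n k} := by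
  induction n generalizing k with
  | zero => simp only [kept]; exact MeasurableSet.univ
  | succ n ih =>
    have : {ω | kept M d (fun q => X q ω) (n+1) k} =
        {ω | kept M d (fun q => X q ω) n (fun i => k i / M)} ∩ X (n+1, k) ⁻¹' {true} := rfl
    rw [this]
    exact (ih _).inter ((hm _) trivial)

theorem meas_kept_pi (n : ℕ) (k : Fin d → ℕ) :
    MeasurableSet {g : Tv M d → Bool | kept M d (extCfg M d g) n k} := by
  induction n generalizing k with
  | zero => simp only [kept]; exact MeasurableSet.univ
  | succ n ih =>
    have : {g : Tv M d → Bool | kept M d (extCfg M d g) (n+1) k} =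
        {g : Tv M d → Bool | kept M d (extCfg M d g) n (fun i => k i / M)} ∩
          {g : Tv M d → Bool | extCfg M d g (n+1, k) = true} := rfl
    rw [this]
    refine (ih _).inter ?_
    by_cases h : valid M d ((n+1 : ℕ), k)
    · have : {g : Tv M d → Bool | extCfg M d g (n+1, k) = true} =
          (fun g : Tv M d → Bool => g ⟨(n+1, k), h⟩) ⁻¹' {true} := by
        ext g
        simp [extCfg, h]
      rw [this]
      exact (measurable_pi_apply _) trivial
    · have : {g : Tv M d → Bool | extCfg M d g (n+1, k) = true} = ∅ := by
        ext g
        simp [extCfg, h]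
      rw [this]
      exact MeasurableSet.empty

variable (M d) in
/-- The event (in configuration space over valid coordinates) that some cube of level `m`
is fully retained. -/
def GAlive (m : ℕ) : Set (Tv M d → Bool) :=
  {g | ∃ j : Fin d → ℕ, (∀ i, j i < M ^ m) ∧ kept M d (extCfg M d g) m j}

theorem meas_GAlive (m : ℕ) : MeasurableSet (GAlive M d m) := by
  have : GAlive M d m = ⋃ (j : Fin d → ℕ), ⋃ (_ : ∀ i, j i < M ^ m),
      {g : Tv M d → Bool | kept M d (extCfg M d g) m j} := by
    ext g
    simp [GAlive]
  rw [this]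
  exact MeasurableSet.iUnion fun j => MeasurableSet.iUnion fun _ => meas_kept_pi m j

end Events

theorem exp_identity {M d N : ℕ} {p : ℝ} (hM : 2 ≤ M) (hd : 1 ≤ d) (hN : 1 ≤ N)
    (hp : 0 < p) :
    (p ^ ((M:ℝ) ^ d / ((M:ℝ) ^ d - 1))) ^ (M ^ (d * N) - 1 : ℕ) =
      p ^ (∑ t ∈ Finset.range N, M ^ (d * (t+1))) := by
  have hM2 : (2:ℝ) ≤ (M:ℝ) := by exact_mod_cast hM
  set x : ℝ := (M:ℝ) ^ d with hx
  have hx2 : (2:ℝ) ≤ x := by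
    calc (2:ℝ) ≤ (M:ℝ) := hM2
      _ ≤ x := le_self_pow₀ (by linarith) (by omega)
  have hx1 : x ≠ 1 := by linarith
  have hxm1 : x - 1 ≠ 0 := by linarith
  rw [← Real.rpow_natCast (p ^ ((M:ℝ) ^ d / ((M:ℝ) ^ d - 1))) (M ^ (d * N) - 1),
    ← Real.rpow_natCast p (∑ t ∈ Finset.range N, M ^ (d * (t+1))),
    ← Real.rpow_mul hp.le]
  congr 1
  have hone : 1 ≤ M ^ (d * N) := Nat.one_le_pow _ _ (by omega)
  have hcast1 : ((M ^ (d * N) - 1 : ℕ) : ℝ) = x ^ N - 1 := by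
    rw [Nat.cast_sub hone]
    push_cast
    rw [hx, ← pow_mul]
  have hcast2 : ((∑ t ∈ Finset.range N, M ^ (d * (t+1)) : ℕ) : ℝ) =
      ∑ t ∈ Finset.range N, x ^ (t+1) := by
    push_cast
    apply Finset.sum_congr rfl
    intro t _
    rw [hx, ← pow_mul]
  rw [hcast1, hcast2]
  have hsum : ∑ t ∈ Finset.range N, x ^ (t+1) = x * ∑ t ∈ Finset.range N, x ^ t := by
    rw [Finset.mul_sum]
    apply Finset.sum_congr rfl
    intro t _
    rw [pow_succ]
    ring
  rw [hsum, geom_sum_eq hx1 N]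
  field_simp
  rw [← hx, div_eq_iff hxm1]; ring

end S12

/-- For fractal percolation with `p > M^(-d)` and any `N ≥ 1`,
`P(Z_N = M^(dN) | E ≠ ∅) = ((1-q) p^(M^d/(M^d-1)))^(M^(dN)-1)` where `q = P(E = ∅)`. -/
theorem stmt12 {Ω : Type} [MeasurableSpace Ω] (d M : ℕ) (p : ℝ) (hd : 1 ≤ d) (hM : 2 ≤ M)
    (hp₀ : (M : ℝ) ^ (-(d : ℤ)) < p) (hp₁ : p < 1)
    (P : Measure Ω) [IsProbabilityMeasure P]
    (retain : ℕ × (Fin d → ℕ) → Ω → Bool)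
    (hmeas : ∀ q, Measurable (retain q))
    (hindep : iIndepFun retain P)
    (hbern : ∀ n k, (∀ i, k i < M ^ (n + 1)) →
      P {ω | retain (n + 1, k) ω = true} = ENNReal.ofReal p)
    (N : ℕ) (hN : 1 ≤ N) :
    P[|{ω | percLimit d M (fun q => retain q ω) ≠ ∅}]
        {ω | Zperc M d (fun q => retain q ω) N = M ^ (d * N)} =
      ENNReal.ofReal
        (((1 - (P {ω | percLimit d M (fun q => retain q ω) = ∅}).toReal) *
            p ^ ((M : ℝ) ^ d / ((M : ℝ) ^ d - 1))) ^ (M ^ (d * N) - 1)) := by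
  classical
  have hM1 : 1 ≤ M := by omega
  have hppos : 0 < p := lt_trans (by positivity) hp₀
  have hbern' : ∀ q : S12.Idx d, S12.valid M d q →
      P (retain q ⁻¹' {true}) = ENNReal.ofReal p := by
    rintro ⟨t, j⟩ ⟨h1, h2⟩
    obtain ⟨t', rfl⟩ : ∃ t', t = t' + 1 := ⟨t - 1, by omega⟩
    exact hbern t' j h2
  set n2 : ℕ := M ^ (d * N) with hn2def
  have hn2 : 2 ≤ n2 := by
    have h1 : 1 ≤ d * N := Nat.one_le_iff_ne_zero.mpr (by positivity)
    calc 2 ≤ M := hM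
      _ = M ^ 1 := (pow_one M).symm
      _ ≤ M ^ (d * N) := Nat.pow_le_pow_right (by omega) h1
  set Φ : Ω → (S12.Tv M d → Bool) := fun ω q => retain q.1 ω with hΦdef
  have hΦmeas : Measurable Φ := measurable_pi_lambda _ fun q => hmeas q.1
  set ΦW : (Fin d → ℕ) → Ω → (S12.Tv M d → Bool) :=
    fun k ω q => retain (S12.sigma' M N k q.1) ω with hΦWdef
  have hΦWmeas : ∀ k, Measurable (ΦW k) := fun k => measurable_pi_lambda _ fun q => hmeas _
  -- pointwise characterizations
  have hroot : ∀ (m : ℕ) (ω : Ω), ω ∈ Φ ⁻¹' S12.GAlive M d m ↔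
      (∃ j : Fin d → ℕ, (∀ i, j i < M ^ m) ∧ kept M d (fun q => retain q ω) m j) := by
    intro m ω
    simp only [Set.mem_preimage, S12.GAlive, Set.mem_setOf_eq]
    have hcg : ∀ j : Fin d → ℕ, (∀ i, j i < M ^ m) →
        (kept M d (S12.extCfg M d (Φ ω)) m j ↔ kept M d (fun q => retain q ω) m j) := by
      intro j hj
      refine S12.kept_congr hM1 ?_ hj
      intro t jj h1 h2 h3
      have hv : S12.valid M d (t, jj) := ⟨h1, h3⟩
      simp [S12.extCfg, hv, hΦdef]
    constructor
    · rintro ⟨j, hj, hk⟩; exact ⟨j, hj, (hcg j hj).mp hk⟩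
    · rintro ⟨j, hj, hk⟩; exact ⟨j, hj, (hcg j hj).mpr hk⟩
  have hsub : ∀ (k : Fin d → ℕ) (m : ℕ) (ω : Ω), ω ∈ ΦW k ⁻¹' S12.GAlive M d m ↔
      (∃ j : Fin d → ℕ, (∀ i, j i < M ^ m) ∧
        kept M d (S12.shiftCfg M (fun q => retain q ω) N k) m j) := by
    intro k m ω
    simp only [Set.mem_preimage, S12.GAlive, Set.mem_setOf_eq]
    have hcg : ∀ j : Fin d → ℕ, (∀ i, j i < M ^ m) →
        (kept M d (S12.extCfg M d (ΦW k ω)) m j ↔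
          kept M d (S12.shiftCfg M (fun q => retain q ω) N k) m j) := by
      intro j hj
      refine S12.kept_congr hM1 ?_ hj
      intro t jj h1 h2 h3
      have hv : S12.valid M d (t, jj) := ⟨h1, h3⟩
      simp [S12.extCfg, hv, hΦWdef, S12.shiftCfg, S12.sigma']
    constructor
    · rintro ⟨j, hj, hk⟩; exact ⟨j, hj, (hcg j hj).mp hk⟩
    · rintro ⟨j, hj, hk⟩; exact ⟨j, hj, (hcg j hj).mpr hk⟩
  -- event B
  set B := {ω | percLimit d M (fun q => retain q ω) ≠ ∅} with hBdef
  have hBiInter : B = ⋂ m, Φ ⁻¹' S12.GAlive M d m := by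
    ext ω
    rw [hBdef, Set.mem_setOf_eq, S12.percLimit_ne_empty_iff hM, Set.mem_iInter]
    unfold S12.alive
    constructor
    · intro h m; exact (hroot m ω).mpr (h m)
    · intro h m; exact (hroot m ω).mp (h m)
  have hGmono : ∀ V : Ω → (S12.Tv M d → Bool), Antitone fun m => V ⁻¹' S12.GAlive M d m := by
    intro V
    apply antitone_nat_of_succ_le
    intro m ω hω
    simp only [Set.mem_preimage, S12.GAlive, Set.mem_setOf_eq] at hω ⊢
    exact S12.exists_kept_mono hM1 hω
  have hBmeas : MeasurableSet B := by
    rw [hBiInter]; exact MeasurableSet.iInter fun m => hΦmeas (S12.meas_GAlive m)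
  set am : ℕ → ℝ≥0∞ := fun m => P (Φ ⁻¹' S12.GAlive M d m) with hamdef
  have hamB : Tendsto am atTop (nhds (P B)) := by
    rw [hBiInter]
    exact tendsto_measure_iInter_atTop (fun m => (hΦmeas (S12.meas_GAlive m)).nullMeasurableSet)
      (hGmono Φ) ⟨0, measure_ne_top P _⟩
  -- law of subtrees
  have hlaw : ∀ (k : Fin d → ℕ), (∀ i, k i < M ^ N) → ∀ m,
      P (ΦW k ⁻¹' S12.GAlive M d m) = am m := by
    intro k hk m
    rw [hamdef, hΦWdef, hΦdef]
    refine S12.law_eq (pr := ENNReal.ofReal p) (fun q => hmeas _) (fun q => hmeas _) ?_ ?_ ?_ ?_ (S12.meas_GAlive m)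
    · exact S12.iIndepFun_comp_inj hindep _
        ((S12.sigma'_injective M N k).comp Subtype.val_injective)
    · exact S12.iIndepFun_comp_inj hindep _ Subtype.val_injective
    · rintro ⟨⟨t, j⟩, hv⟩
      refine hbern' _ ⟨by simp [S12.sigma']; omega, ?_⟩
      intro i
      exact S12.child_lt hM1 hk (fun i => hv.2 i) i
    · intro q; exact hbern' _ q.2
  -- C event
  set C := {ω | ∀ q ∈ S12.TF M d N, retain q ω = true} with hCdef
  have hCiInter : C = ⋂ q ∈ S12.TF M d N, retain q ⁻¹' {true} := by
    ext ω; simp [hCdef]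
  have hCmeas : MeasurableSet C := by
    rw [hCiInter]
    exact Set.Finite.measurableSet_biInter (Finset.finite_toSet _)
      (fun q _ => (hmeas q) trivial)
  have hPC : P C = ENNReal.ofReal p ^ (S12.TF M d N).card := by
    have hprod := hindep.measure_inter_preimage_eq_mul (S12.TF M d N)
      (sets := fun _ => ({true} : Set Bool)) (fun _ _ => trivial)
    rw [hCiInter, hprod,
      Finset.prod_congr rfl (fun q hq => hbern' q (S12.valid_of_mem_TF hq)),
      Finset.prod_const]
  -- A event
  set A := {ω | Zperc M d (fun q => retain q ω) N = M ^ (d * N)} with hAdef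
  set KN : Finset (Fin d → ℕ) := Fintype.piFinset fun _ : Fin d => Finset.range (M ^ N)
    with hKNdef
  have hmemKN : ∀ k : Fin d → ℕ, k ∈ KN ↔ ∀ i, k i < M ^ N := by
    intro k; simp [hKNdef, Fintype.mem_piFinset]
  have hcardKN : KN.card = n2 := by
    rw [hKNdef, Fintype.card_piFinset]
    simp only [Finset.card_range, Finset.prod_const, Finset.card_univ, Fintype.card_fin]
    rw [← pow_mul, Nat.mul_comm]
  have hAeq : A = C ∩ ⋂ k ∈ KN, ⋂ m, ΦW k ⁻¹' S12.GAlive M d m := by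
    ext ω
    rw [hAdef, Set.mem_setOf_eq, S12.zfull_iff hM]
    constructor
    · intro h
      have hkept : ∀ k : Fin d → ℕ, (∀ i, k i < M ^ N) →
          kept M d (fun q => retain q ω) N k :=
        fun k hk => ((S12.surviving_iff hM1 hk).mp (h k hk)).1
      refine ⟨?_, ?_⟩
      · rw [hCdef, Set.mem_setOf_eq]
        intro q hq
        have hall := (S12.allkept_iff hM1 (fun q => retain q ω) N).mp hkept
        exact hall q.1 q.2 (S12.mem_TF.mp hq).1 (S12.mem_TF.mp hq).2.1 (S12.mem_TF.mp hq).2.2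
      · rw [Set.mem_iInter₂]
        intro k hk
        rw [Set.mem_iInter]
        intro m
        have hkb := (hmemKN k).mp hk
        have halive := ((S12.surviving_iff hM1 hkb).mp (h k hkb)).2
        exact (hsub k m ω).mpr (halive m)
    · rintro ⟨hC, hD⟩ k hk
      refine (S12.surviving_iff hM1 hk).mpr ⟨?_, ?_⟩
      · refine (S12.allkept_iff hM1 (fun q => retain q ω) N).mpr ?_ k hk
        intro t jj h1 h2 h3
        exact hC (t, jj) (S12.mem_TF.mpr ⟨h1, h2, h3⟩)
      · intro m
        have hmem := Set.mem_iInter.mp (Set.mem_iInter₂.mp hD k ((hmemKN k).mpr hk)) m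
        exact (hsub k m ω).mp hmem
  set Am : ℕ → Set Ω := fun m => C ∩ ⋂ k ∈ KN, ΦW k ⁻¹' S12.GAlive M d m with hAmdef
  have hAiInter : A = ⋂ m, Am m := by
    rw [hAeq, hAmdef]
    ext ω
    simp only [Set.mem_inter_iff, Set.mem_iInter]
    constructor
    · rintro ⟨h1, h2⟩ m
      exact ⟨h1, fun k hk => h2 k hk m⟩
    · intro h
      exact ⟨(h 0).1, fun k hk m => (h m).2 k hk⟩
  have hAmmeas : ∀ m, MeasurableSet (Am m) := fun m =>
    hCmeas.inter (Set.Finite.measurableSet_biInter (Finset.finite_toSet _)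
      fun k _ => (hΦWmeas k) (S12.meas_GAlive m))
  have hAmanti : Antitone Am := by
    intro m m' hmm
    rw [hAmdef]
    exact Set.inter_subset_inter_right _
      (Set.iInter₂_mono fun k _ => hGmono (ΦW k) hmm)
  have hPA : Tendsto (fun m => P (Am m)) atTop (nhds (P A)) := by
    rw [hAiInter]
    exact tendsto_measure_iInter_atTop (fun m => (hAmmeas m).nullMeasurableSet) hAmanti
      ⟨0, measure_ne_top P _⟩
  -- blocks
  have hblocks : ∀ m, P (Am m) = P C * am m ^ n2 := by
    intro m
    set Blk : (Fin d → ℕ) → Finset (S12.Idx d) :=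
      fun k => (S12.TF M d m).image (S12.sigma' M N k) with hBlkdef
    set GB : (k : Fin d → ℕ) → Set ((q : (Blk k : Finset (S12.Idx d))) → Bool) := fun k =>
      {g | ∃ j : Fin d → ℕ, (∀ i, j i < M ^ m) ∧ kept M d
        (fun q => if h : S12.sigma' M N k q ∈ Blk k then g ⟨_, h⟩ else false) m j}
      with hGBdef
    have hmemBlk : ∀ k q, q ∈ Blk k ↔
        ∃ t jj, 1 ≤ t ∧ t ≤ m ∧ (∀ i, jj i < M ^ t) ∧ S12.sigma' M N k (t, jj) = q := by
      intro k q
      simp only [hBlkdef, Finset.mem_image]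
      constructor
      · rintro ⟨⟨t, jj⟩, ha, rfl⟩
        have h := S12.mem_TF.mp ha
        exact ⟨t, jj, h.1, h.2.1, h.2.2, rfl⟩
      · rintro ⟨t, jj, h1, h2, h3, rfl⟩
        exact ⟨(t, jj), S12.mem_TF.mpr ⟨h1, h2, h3⟩, rfl⟩
    have hCt : C = (fun ω (q : (S12.TF M d N : Finset (S12.Idx d))) => retain q.1 ω) ⁻¹'
        {g : (q : (S12.TF M d N : Finset (S12.Idx d))) → Bool | ∀ q, g q = true} := by
      ext ω
      simp only [hCdef, Set.mem_setOf_eq, Set.mem_preimage]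
      constructor
      · intro h q; exact h q.1 q.2
      · intro h q hq; exact h ⟨q, hq⟩
    have hDt : ∀ k, ΦW k ⁻¹' S12.GAlive M d m =
        (fun ω (q : (Blk k : Finset (S12.Idx d))) => retain q.1 ω) ⁻¹' GB k := by
      intro k
      ext ω
      rw [show (ω ∈ ΦW k ⁻¹' S12.GAlive M d m ↔ _) from hsub k m ω]
      simp only [Set.mem_preimage, hGBdef, Set.mem_setOf_eq]
      constructor
      · rintro ⟨j, hj, hk2⟩
        refine ⟨j, hj, (S12.kept_congr hM1 ?_ hj).mpr hk2⟩
        intro t jj h1 h2 h3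
        have hmem : S12.sigma' M N k (t, jj) ∈ Blk k := by
          rw [hmemBlk]; exact ⟨t, jj, h1, h2, h3, rfl⟩
        simp only [hmem, dif_pos]
        rfl
      · rintro ⟨j, hj, hk2⟩
        refine ⟨j, hj, (S12.kept_congr hM1 ?_ hj).mp hk2⟩
        intro t jj h1 h2 h3
        have hmem : S12.sigma' M N k (t, jj) ∈ Blk k := by
          rw [hmemBlk]; exact ⟨t, jj, h1, h2, h3, rfl⟩
        simp only [hmem, dif_pos]
        rfl
    let F : Option (Fin d → ℕ) → Finset (S12.Idx d) := fun o =>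
      Option.rec (S12.TF M d N) (fun k => Blk k) o
    let G : (o : Option (Fin d → ℕ)) → Set ((q : (F o : Finset (S12.Idx d))) → Bool) := fun o =>
      Option.rec (motive := fun o => Set ((q : (F o : Finset (S12.Idx d))) → Bool))
        {g | ∀ q, g q = true} (fun k => GB k) o
    have hnone : none ∉ KN.image some := by simp
    have hTB : ∀ k, Disjoint (S12.TF M d N) (Blk k) := by
      intro k
      rw [Finset.disjoint_left]
      intro q hq hq'
      obtain ⟨t, jj, h1, h2, h3, rfl⟩ := (hmemBlk k q).mp hq'
      have h := (S12.mem_TF.mp hq).2.1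
      simp only [S12.sigma'] at h
      omega
    have hBB : ∀ k k', k ≠ k' → Disjoint (Blk k) (Blk k') := by
      intro k k' hne
      rw [Finset.disjoint_left]
      intro q hq hq'
      obtain ⟨t, jj, h1, h2, h3, rfl⟩ := (hmemBlk k q).mp hq
      obtain ⟨t', jj', h1', h2', h3', heq⟩ := (hmemBlk k' _).mp hq'
      apply hne
      funext i
      simp only [S12.sigma', Prod.mk.injEq] at heq
      obtain ⟨he1, he2⟩ := heq
      have ht : t' = t := by omega
      rw [ht] at he2 h3'
      have hci := congrFun he2 i
      simp only [S12.child] at hci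
      have d1 : (k' i * M ^ t + jj' i) / M ^ t = k' i := S12.child_div hM1 (h3' i)
      have d2 : (k i * M ^ t + jj i) / M ^ t = k i := S12.child_div hM1 (h3 i)
      rw [hci] at d1
      omega
    have hdisj : ∀ a ∈ insert none (KN.image some), ∀ b ∈ insert none (KN.image some),
        a ≠ b → Disjoint (F a) (F b) := by
      rintro (_ | k) ha (_ | k') hb hab
      · exact absurd rfl hab
      · exact hTB k'
      · exact (hTB k).symm
      · exact hBB k k' (fun h => hab (by rw [h]))
    have hkey := S12.blocks_indep hmeas hindep (insert none (KN.image some)) F hdisj G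
    have hL : (⋂ o ∈ insert none (KN.image some),
        (fun ω (q : (F o : Finset (S12.Idx d))) => retain q.1 ω) ⁻¹' G o) = Am m := by
      rw [Finset.set_biInter_insert, hAmdef]
      congr 1
      · exact hCt.symm
      · ext ω
        simp only [Set.mem_iInter, Finset.mem_image]
        constructor
        · rintro h k hk
          rw [hDt k]
          exact h (some k) ⟨k, hk, rfl⟩
        · rintro h o ⟨k, hk, rfl⟩
          have hh := h k hk
          rw [hDt k] at hh
          exact hh
    have hR : (∏ o ∈ insert none (KN.image some),
        P ((fun ω (q : (F o : Finset (S12.Idx d))) => retain q.1 ω) ⁻¹' G o))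
        = P C * am m ^ n2 := by
      rw [Finset.prod_insert hnone,
        Finset.prod_image (fun a _ b _ h => Option.some_injective _ h)]
      congr 1
      · exact (congrArg P hCt).symm
      · rw [← hcardKN, ← Finset.prod_const]
        apply Finset.prod_congr rfl
        intro k hk
        rw [← hDt k]
        exact hlaw k ((hmemKN k).mp hk) m
    rw [hL] at hkey
    rw [hkey, hR]
  have hPAval : P A = P C * P B ^ n2 := by
    have h2 : Tendsto (fun m => P C * am m ^ n2) atTop (nhds (P C * P B ^ n2)) :=
      ENNReal.Tendsto.const_mul
        (((ENNReal.continuous_pow n2).tendsto (P B)).comp hamB)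
        (Or.inr (measure_ne_top P C))
    have h1 := hPA
    rw [show (fun m => P (Am m)) = fun m => P C * am m ^ n2 from funext hblocks] at h1
    exact tendsto_nhds_unique h1 h2
  -- A ⊆ B
  have hAB : A ⊆ B := by
    rw [hAeq, hBiInter]
    rintro ω ⟨hC', hD'⟩
    rw [Set.mem_iInter]
    intro m
    rcases Nat.le_total m N with hmN | hNm
    · refine (hroot m ω).mpr ⟨0, fun i => pow_pos (by omega) _, ?_⟩
      refine (S12.allkept_iff hM1 (fun q => retain q ω) m).mpr ?_ 0
        (fun i => pow_pos (by omega) _)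
      intro t jj h1 h2 h3
      exact hC' (t, jj) (S12.mem_TF.mpr ⟨h1, by omega, h3⟩)
    · obtain ⟨u, rfl⟩ : ∃ u, m = N + u := ⟨m - N, by omega⟩
      have h0b : ∀ i : Fin d, (0 : Fin d → ℕ) i < M ^ N :=
        fun i => pow_pos (by omega) _
      have h0KN : (0 : Fin d → ℕ) ∈ KN := (hmemKN 0).mpr h0b
      have halive := Set.mem_iInter.mp (Set.mem_iInter₂.mp hD' 0 h0KN) u
      obtain ⟨j, hj, hkj⟩ := (hsub 0 u ω).mp halive
      refine (hroot (N + u) ω).mpr ⟨S12.child M 0 u j, S12.child_lt hM1 h0b hj, ?_⟩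
      refine (S12.kept_child hM1 h0b hj).mpr ⟨?_, hkj⟩
      refine (S12.allkept_iff hM1 (fun q => retain q ω) N).mpr ?_ 0 h0b
      intro t jj h1 h2 h3
      exact hC' (t, jj) (S12.mem_TF.mpr ⟨h1, h2, h3⟩)
  -- final computation
  have hcompl : {ω | percLimit d M (fun q => retain q ω) = ∅} = Bᶜ := by
    ext ω; simp [hBdef]
  rw [ProbabilityTheory.cond_apply hBmeas P A, Set.inter_eq_self_of_subset_right hAB,
    hcompl, prob_compl_eq_one_sub hBmeas]
  by_cases hB0 : P B = 0
  · have hPA0 : P A = 0 :=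
      le_antisymm (le_trans (measure_mono hAB) (le_of_eq hB0)) (zero_le)
    rw [hPA0, mul_zero, hB0]
    simp only [tsub_zero, ENNReal.toReal_one, sub_self, zero_mul]
    rw [zero_pow (by omega : n2 - 1 ≠ 0), ENNReal.ofReal_zero]
  · have hBfin : P B ≠ ⊤ := measure_ne_top P B
    set θ : ℝ := (P B).toReal with hθdef
    have hθpos : 0 < θ := ENNReal.toReal_pos hB0 hBfin
    have hPBθ : P B = ENNReal.ofReal θ := (ENNReal.ofReal_toReal hBfin).symm
    have ht1 : (1 - P B).toReal = 1 - θ := by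
      rw [ENNReal.toReal_sub_of_le prob_le_one (by simp)]
      simp [hθdef]
    rw [ht1, show (1 : ℝ) - (1 - θ) = θ by ring]
    rw [hPAval, hPC]
    have hpowsplit : P B ^ n2 = P B * P B ^ (n2 - 1) := by
      conv_lhs => rw [show n2 = 1 + (n2 - 1) by omega]
      rw [pow_add, pow_one]
    rw [hpowsplit,
      show (P B)⁻¹ * (ENNReal.ofReal p ^ (S12.TF M d N).card * (P B * P B ^ (n2-1))) =
        ((P B)⁻¹ * P B) * (ENNReal.ofReal p ^ (S12.TF M d N).card * P B ^ (n2-1)) by ring,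
      ENNReal.inv_mul_cancel hB0 hBfin, one_mul]
    rw [hPBθ, ← ENNReal.ofReal_pow hppos.le, ← ENNReal.ofReal_pow hθpos.le,
      ← ENNReal.ofReal_mul (by positivity)]
    congr 1
    rw [S12.card_TF, mul_pow, ← S12.exp_identity hM hd hN hppos, ← hn2def]
    ring
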